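/- Let ψ and φ be permutation-symmetric states of n ≥ 3 qudits and suppose there exist invertible d×d matrices A_1,…,A_n with (A_1 ⊗ A_2 ⊗ ⋯ ⊗ A_n) ψ = φ. Then there exists a single invertible d×d matrix A with A^{⊗n} ψ = φ. -/

import Mathlib

open Matrix BigOperators Polynomial

/-- Permutation symmetry of an `n`-qudit state represented by its amplitudes. -/
def PSym {n d : ℕ} (ψ : (Fin n → Fin d) → ℂ) : Prop :=
  ∀ σ : Equiv.Perm (Fin n), ∀ x : Fin n → Fin d, ψ (x ∘ σ) = ψ x

/-- The operator `B` acting on the `k`-th tensor factor (identity elsewhere). -/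
noncomputable def appAt {n d : ℕ} (k : Fin n) (B : Matrix (Fin d) (Fin d) ℂ)
    (ψ : (Fin n → Fin d) → ℂ) : (Fin n → Fin d) → ℂ :=
  fun x => ∑ j : Fin d, B (x k) j * ψ (Function.update x k j)

/-- The operator `A 1 ⊗ A 2 ⊗ ⋯ ⊗ A n` acting on an `n`-qudit state. -/
noncomputable def appAll {n d : ℕ} (A : Fin n → Matrix (Fin d) (Fin d) ℂ)
    (ψ : (Fin n → Fin d) → ℂ) : (Fin n → Fin d) → ℂ :=
  fun x => ∑ y : Fin n → Fin d, (∏ k, A k (x k) (y k)) * ψ y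

namespace Stmt8Aux

variable {n d : ℕ}

/-! ### Basic lemmas about `appAt` and `appAll` -/

lemma appAt_mul (k : Fin n) (M N : Matrix (Fin d) (Fin d) ℂ) (ψ : (Fin n → Fin d) → ℂ) :
    appAt k M (appAt k N ψ) = appAt k (M * N) ψ := by
  funext x
  simp only [appAt, Function.update_idem, Function.update_self, Matrix.mul_apply,
    Finset.mul_sum, Finset.sum_mul]
  rw [Finset.sum_comm]
  exact Finset.sum_congr rfl fun l _ => Finset.sum_congr rfl fun j _ => by ring

lemma appAt_comm {i j : Fin n} (hij : i ≠ j) (M N : Matrix (Fin d) (Fin d) ℂ)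
    (ψ : (Fin n → Fin d) → ℂ) :
    appAt i M (appAt j N ψ) = appAt j N (appAt i M ψ) := by
  funext x
  simp only [appAt, Function.update_of_ne hij, Function.update_of_ne (Ne.symm hij),
    Finset.mul_sum]
  rw [Finset.sum_comm]
  refine Finset.sum_congr rfl fun l _ => Finset.sum_congr rfl fun j' _ => by
    rw [Function.update_comm hij]
    ring

lemma appAt_one (k : Fin n) (ψ : (Fin n → Fin d) → ℂ) :
    appAt k (1 : Matrix (Fin d) (Fin d) ℂ) ψ = ψ := by
  funext x
  simp only [appAt, Matrix.one_apply]
  rw [Finset.sum_eq_single (x k)]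
  · simp
  · intro b _ hb; simp [Ne.symm hb]
  · simp

lemma appAll_mul (A B : Fin n → Matrix (Fin d) (Fin d) ℂ) (ψ : (Fin n → Fin d) → ℂ) :
    appAll A (appAll B ψ) = appAll (fun k => A k * B k) ψ := by
  funext x
  simp only [appAll, Finset.mul_sum, Matrix.mul_apply]
  rw [Finset.sum_comm]
  refine Finset.sum_congr rfl fun z _ => ?_
  rw [Fintype.prod_sum (fun k j => A k (x k) j * B k j (z k)), Finset.sum_mul]
  refine Finset.sum_congr rfl fun y _ => ?_
  rw [Finset.prod_mul_distrib, mul_assoc]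

lemma appAll_eq_appAt (i : Fin n) (M : Matrix (Fin d) (Fin d) ℂ) (ψ : (Fin n → Fin d) → ℂ) :
    appAll (Function.update (fun _ => (1 : Matrix (Fin d) (Fin d) ℂ)) i M) ψ = appAt i M ψ := by
  funext x
  simp only [appAll, appAt]
  rw [← Finset.sum_subset (Finset.subset_univ ((Finset.univ : Finset (Fin d)).image
      (fun j => Function.update x i j)))]
  · rw [Finset.sum_image (fun a _ b _ h => by simpa using congrFun h i)]
    refine Finset.sum_congr rfl fun j _ => ?_
    congr 1
    rw [← Finset.prod_erase_mul _ _ (Finset.mem_univ i)]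
    have h1 : ∀ k ∈ Finset.univ.erase i,
        Function.update (fun _ => (1 : Matrix (Fin d) (Fin d) ℂ)) i M k (x k)
          (Function.update x i j k) = 1 := by
      intro k hk
      rcases Finset.mem_erase.mp hk with ⟨hki, _⟩
      rw [Function.update_of_ne hki, Function.update_of_ne hki, Matrix.one_apply_eq]
    rw [Finset.prod_congr rfl h1, Finset.prod_const_one, one_mul,
      Function.update_self, Function.update_self]
  · intro y _ hy
    simp only [Finset.mem_image, Finset.mem_univ, true_and] at hy
    have : ∃ k, k ≠ i ∧ y k ≠ x k := by
      by_contra hc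
      push_neg at hc
      refine hy ⟨y i, funext fun k => ?_⟩
      by_cases hk : k = i
      · subst hk; simp
      · simp [Function.update_of_ne hk, hc k hk]
    obtain ⟨k, hki, hyk⟩ := this
    rw [Finset.prod_eq_zero (Finset.mem_univ k), zero_mul]
    rw [Function.update_of_ne hki, Matrix.one_apply_ne (Ne.symm hyk)]

lemma appAll_one (i : Fin n) (ψ : (Fin n → Fin d) → ℂ) :
    appAll (fun _ => (1 : Matrix (Fin d) (Fin d) ℂ)) ψ = ψ := by
  have h := appAll_eq_appAt i (1 : Matrix (Fin d) (Fin d) ℂ) ψ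
  rwa [Function.update_eq_self, appAt_one] at h

/-! ### Permutations -/

lemma update_comp_perm (σ : Equiv.Perm (Fin n)) (x : Fin n → Fin d) (k : Fin n) (j : Fin d) :
    (Function.update x (σ k) j) ∘ σ = Function.update (x ∘ σ) k j := by
  funext m
  by_cases hm : m = k
  · subst hm; simp
  · have : σ m ≠ σ k := fun hc => hm (σ.injective hc)
    simp [Function.comp, Function.update_of_ne hm, Function.update_of_ne this]

lemma perm_appAt (σ : Equiv.Perm (Fin n)) (k : Fin n) (M : Matrix (Fin d) (Fin d) ℂ)
    (χ : (Fin n → Fin d) → ℂ) :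
    (fun x => appAt k M χ (x ∘ σ)) = appAt (σ k) M (fun x => χ (x ∘ σ)) := by
  funext x
  simp only [appAt, Function.comp_apply]
  refine Finset.sum_congr rfl fun j _ => ?_
  rw [← update_comp_perm σ x k j]

lemma bal_spread {ψ : (Fin n → Fin d) → ℂ} (hψ : PSym ψ) (C : Matrix (Fin d) (Fin d) ℂ)
    {i j k l : Fin n} (hij : i ≠ j) (hkl : k ≠ l)
    (h : appAt i C ψ = appAt j C ψ) : appAt k C ψ = appAt l C ψ := by
  set σ : Equiv.Perm (Fin n) :=
    (Equiv.swap i k).trans (Equiv.swap ((Equiv.swap i k) j) l) with hσ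
  have hσi : σ i = k := by
    have h1 : (Equiv.swap i k) i = k := Equiv.swap_apply_left i k
    have h2 : (Equiv.swap i k) j ≠ k := by
      intro hc
      apply hij
      apply (Equiv.swap i k).injective
      rw [hc, Equiv.swap_apply_left]
    simp only [hσ, Equiv.trans_apply, h1]
    exact Equiv.swap_apply_of_ne_of_ne (Ne.symm h2) hkl
  have hσj : σ j = l := by
    simp only [hσ, Equiv.trans_apply]
    exact Equiv.swap_apply_left _ _
  have hfix : (fun x : Fin n → Fin d => ψ (x ∘ σ)) = ψ := funext fun x => hψ σ x
  calc appAt k C ψ = appAt (σ i) C (fun x => ψ (x ∘ σ)) := by rw [hσi, hfix]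
    _ = (fun x => appAt i C ψ (x ∘ σ)) := (perm_appAt σ i C ψ).symm
    _ = (fun x => appAt j C ψ (x ∘ σ)) := by rw [h]
    _ = appAt (σ j) C (fun x => ψ (x ∘ σ)) := perm_appAt σ j C ψ
    _ = appAt l C ψ := by rw [hσj, hfix]

lemma appAll_perm {ψ : (Fin n → Fin d) → ℂ} (hψ : PSym ψ)
    (A : Fin n → Matrix (Fin d) (Fin d) ℂ) (σ : Equiv.Perm (Fin n)) :
    appAll (A ∘ σ) ψ = fun x => appAll A ψ (x ∘ ⇑σ⁻¹) := by
  funext x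
  simp only [appAll, Function.comp_apply]
  have hprod : ∀ y : Fin n → Fin d,
      (∏ k, A (σ k) (x k) (y k)) = ∏ k, A k (x (σ⁻¹ k)) (y (σ⁻¹ k)) := by
    intro y
    rw [← Equiv.prod_comp σ (fun k => A k (x (σ⁻¹ k)) (y (σ⁻¹ k)))]
    refine Finset.prod_congr rfl fun k _ => by simp
  simp only [hprod]
  refine Fintype.sum_bijective (fun y => y ∘ ⇑σ⁻¹) ?_ _ _ fun y => ?_
  · exact (Equiv.arrowCongr σ (Equiv.refl (Fin d))).bijective
  · have h2 : ψ (y ∘ ⇑σ⁻¹) = ψ y := hψ σ⁻¹ y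
    simp only [Function.comp_apply, h2]

/-! ### Balanced matrices -/

/-- `M` acts the same way on `ψ` no matter on which tensor factor it is applied. -/
def Bal (ψ : (Fin n → Fin d) → ℂ) (M : Matrix (Fin d) (Fin d) ℂ) : Prop :=
  ∀ i j : Fin n, appAt i M ψ = appAt j M ψ

lemma bal_one (ψ : (Fin n → Fin d) → ℂ) : Bal ψ (1 : Matrix (Fin d) (Fin d) ℂ) := by
  intro i j; rw [appAt_one, appAt_one]

lemma exists_third (hn : 3 ≤ n) (i j : Fin n) : ∃ k : Fin n, k ≠ i ∧ k ≠ j := by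
  have hcard : ({i, j} : Finset (Fin n)).card < Fintype.card (Fin n) := by
    calc ({i, j} : Finset (Fin n)).card ≤ 2 :=
        (Finset.card_insert_le _ _).trans (by simp)
      _ < Fintype.card (Fin n) := by rw [Fintype.card_fin]; omega
  have hne : (({i, j} : Finset (Fin n))ᶜ).Nonempty := by
    rw [← Finset.card_pos, Finset.card_compl]
    omega
  obtain ⟨k, hk⟩ := hne
  simp only [Finset.mem_compl, Finset.mem_insert, Finset.mem_singleton, not_or] at hk
  exact ⟨k, hk.1, hk.2⟩

lemma bal_mul (hn : 3 ≤ n) {ψ : (Fin n → Fin d) → ℂ} {M N : Matrix (Fin d) (Fin d) ℂ}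
    (hM : Bal ψ M) (hN : Bal ψ N) : Bal ψ (M * N) := by
  intro i j
  by_cases hij : i = j
  · rw [hij]
  obtain ⟨k, hki, hkj⟩ := exists_third hn i j
  calc appAt i (M * N) ψ = appAt i M (appAt i N ψ) := (appAt_mul i M N ψ).symm
    _ = appAt i M (appAt k N ψ) := by rw [hN i k]
    _ = appAt k N (appAt i M ψ) := appAt_comm (Ne.symm hki) M N ψ
    _ = appAt k N (appAt j M ψ) := by rw [hM i j]
    _ = appAt j M (appAt k N ψ) := appAt_comm hkj N M ψ
    _ = appAt j M (appAt j N ψ) := by rw [hN k j]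
    _ = appAt j (M * N) ψ := appAt_mul j M N ψ

lemma appAt_add (k : Fin n) (M N : Matrix (Fin d) (Fin d) ℂ) (ψ : (Fin n → Fin d) → ℂ) :
    appAt k (M + N) ψ = fun x => appAt k M ψ x + appAt k N ψ x := by
  funext x
  simp [appAt, add_mul, Finset.sum_add_distrib]

lemma appAt_smul (k : Fin n) (c : ℂ) (M : Matrix (Fin d) (Fin d) ℂ)
    (ψ : (Fin n → Fin d) → ℂ) :
    appAt k (c • M) ψ = fun x => c * appAt k M ψ x := by
  funext x
  simp [appAt, Finset.mul_sum, mul_assoc]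

lemma bal_smul {ψ : (Fin n → Fin d) → ℂ} (c : ℂ) {M : Matrix (Fin d) (Fin d) ℂ}
    (hM : Bal ψ M) : Bal ψ (c • M) := by
  intro i j
  rw [appAt_smul, appAt_smul, hM i j]

lemma bal_pow (hn : 3 ≤ n) {ψ : (Fin n → Fin d) → ℂ} {M : Matrix (Fin d) (Fin d) ℂ}
    (hM : Bal ψ M) (m : ℕ) : Bal ψ (M ^ m) := by
  induction m with
  | zero => simpa using bal_one ψ
  | succ m ih => rw [pow_succ]; exact bal_mul hn ih hM

lemma bal_sum (hn : 3 ≤ n) {ψ : (Fin n → Fin d) → ℂ} {m : ℕ}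
    (F : ℕ → Matrix (Fin d) (Fin d) ℂ) (hF : ∀ i, Bal ψ (F i)) :
    Bal ψ (∑ i ∈ Finset.range m, F i) := by
  induction m with
  | zero =>
    intro i j
    simp only [Finset.range_zero, Finset.sum_empty]
    have h0 : (0 : Matrix (Fin d) (Fin d) ℂ) = (0 : ℂ) • (1 : Matrix (Fin d) (Fin d) ℂ) := by
      simp
    rw [h0]
    exact bal_smul 0 (bal_one ψ) i j
  | succ m ih =>
    intro i j
    rw [Finset.sum_range_succ]
    have h1 := ih i j
    have h2 := hF m i j
    rw [appAt_add, appAt_add, h1, h2]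

lemma bal_aeval (hn : 3 ≤ n) {ψ : (Fin n → Fin d) → ℂ} {Q : Matrix (Fin d) (Fin d) ℂ}
    (hQ : Bal ψ Q) (p : ℂ[X]) : Bal ψ (Polynomial.aeval Q p) := by
  rw [Polynomial.aeval_eq_sum_range]
  exact bal_sum hn _ fun i => bal_smul _ (bal_pow hn hQ i)

/-! ### Polynomial n-th roots -/

lemma pow_add_expand {R : Type*} [CommRing R] (a b : R) (m : ℕ) :
    ∃ t, (a + b) ^ (m + 1) = a ^ (m + 1) + (m + 1 : ℕ) * a ^ m * b + b ^ 2 * t := by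
  induction m with
  | zero => exact ⟨0, by push_cast; ring⟩
  | succ m ih =>
    obtain ⟨t, ht⟩ := ih
    refine ⟨a * t + (m + 1 : ℕ) * a ^ m + b * t, ?_⟩
    have h2 : (a + b) ^ (m + 1 + 1) = (a + b) * (a + b) ^ (m + 1) := by ring
    rw [h2, ht]
    push_cast
    ring

lemma local_root {n : ℕ} (hn : 0 < n) (l : ℂ) (hl : l ≠ 0) :
    ∀ m : ℕ, 1 ≤ m → ∃ r : ℂ[X], ((X - C l) ^ m ∣ r ^ n - X) ∧ r.eval l ≠ 0 := by
  intro m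
  induction m with
  | zero => omega
  | succ m ih =>
    intro _
    rcases Nat.eq_zero_or_pos m with hm0 | hm1
    · subst hm0
      obtain ⟨z, hz⟩ := IsAlgClosed.exists_pow_nat_eq l hn
      have hz0 : z ≠ 0 := by
        intro h0; apply hl; rw [← hz, h0, zero_pow (by omega)]
      refine ⟨C z, ⟨-1, by rw [← map_pow, hz]; ring⟩, by simpa using hz0⟩
    · obtain ⟨r, ⟨g, hg⟩, hrl⟩ := ih hm1
      set μ := r.eval l with hμ
      have hnz : (n : ℂ) * μ ^ (n - 1) ≠ 0 :=
        mul_ne_zero (Nat.cast_ne_zero.mpr (by omega)) (pow_ne_zero _ hrl)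
      set c : ℂ := -(g.eval l) / ((n : ℂ) * μ ^ (n - 1)) with hc
      set s : ℂ[X] := C c * (X - C l) ^ m with hs
      refine ⟨r + s, ?_, ?_⟩
      · obtain ⟨t, ht⟩ := pow_add_expand r s (n - 1)
        have hn1 : n - 1 + 1 = n := by omega
        rw [hn1] at ht
        have key : (r + s) ^ n - X
            = (X - C l) ^ m * (g + (n : ℂ[X]) * r ^ (n - 1) * C c) + s ^ 2 * t := by
          rw [ht, hs]
          linear_combination hg
        rw [key]
        refine dvd_add ?_ ?_
        · rw [pow_succ]
          refine mul_dvd_mul dvd_rfl ?_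
          rw [dvd_iff_isRoot]
          have hev : (g + (n : ℂ[X]) * r ^ (n - 1) * C c).eval l
              = g.eval l + (n : ℂ) * μ ^ (n - 1) * c := by
            simp [hμ]
          rw [IsRoot, hev, hc]
          rw [mul_div_assoc', mul_div_cancel_left₀ _ hnz, add_neg_cancel]
        · exact dvd_trans (pow_dvd_pow _ (by omega : m + 1 ≤ 2 * m))
            ⟨C c ^ 2 * t, by rw [hs]; ring⟩
      · have : (r + s).eval l = μ := by
          rw [hs]
          simp [zero_pow (by omega : m ≠ 0), hμ]
        rw [this]; exact hrl

lemma exists_nth_root_poly {n : ℕ} (hn : 0 < n) :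
    ∀ N : ℕ, ∀ q : ℂ[X], q.natDegree ≤ N → q ≠ 0 → q.eval 0 ≠ 0 →
      ∃ r : ℂ[X], q ∣ r ^ n - X := by
  intro N
  induction N with
  | zero =>
    intro q hdeg hq0 hqe
    have : IsUnit q := by
      rw [Polynomial.isUnit_iff]
      refine ⟨q.coeff 0, isUnit_iff_ne_zero.mpr ?_, ?_⟩
      · rwa [Polynomial.coeff_zero_eq_eval_zero]
      · exact (Polynomial.eq_C_of_natDegree_eq_zero (Nat.le_zero.mp hdeg)).symm
    exact ⟨0, this.dvd⟩
  | succ N ihN =>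
    intro q hdeg hq0 hqe
    rcases Nat.eq_zero_or_pos q.natDegree with h0 | hpos
    · have : IsUnit q := by
        rw [Polynomial.isUnit_iff]
        refine ⟨q.coeff 0, isUnit_iff_ne_zero.mpr ?_, ?_⟩
        · rwa [Polynomial.coeff_zero_eq_eval_zero]
        · exact (Polynomial.eq_C_of_natDegree_eq_zero h0).symm
      exact ⟨0, this.dvd⟩
    · obtain ⟨z, hz⟩ := Complex.exists_root (Polynomial.natDegree_pos_iff_degree_pos.mp hpos)
      have hzne : z ≠ 0 := by
        intro h0; subst h0; exact hqe hz
      set m := q.rootMultiplicity z with hm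
      have hm1 : 1 ≤ m := (Polynomial.rootMultiplicity_pos hq0).mpr hz
      set q₂ := q /ₘ (X - C z) ^ m with hq₂
      have heq : (X - C z) ^ m * q₂ = q := Polynomial.pow_mul_divByMonic_rootMultiplicity_eq q z
      have hq₂l : q₂.eval z ≠ 0 := Polynomial.eval_divByMonic_pow_rootMultiplicity_ne_zero z hq0
      have hq₂0 : q₂ ≠ 0 := by
        intro h0; apply hq0; rw [← heq, h0, mul_zero]
      have hq₂e : q₂.eval 0 ≠ 0 := by
        intro h0; apply hqe
        rw [← heq, Polynomial.eval_mul, h0, mul_zero]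
      have hdeg2 : q₂.natDegree ≤ N := by
        have h1 : q.natDegree = m + q₂.natDegree := by
          rw [← heq, Polynomial.natDegree_mul (pow_ne_zero _ (Polynomial.X_sub_C_ne_zero z)) hq₂0]
          · congr 1
            rw [Polynomial.natDegree_pow, Polynomial.natDegree_X_sub_C, mul_one]
        omega
      obtain ⟨r₂, hr₂⟩ := ihN q₂ hdeg2 hq₂0 hq₂e
      obtain ⟨r₁, hr₁, _⟩ := local_root hn z hzne m hm1
      have cop : IsCoprime ((X - C z) ^ m) q₂ := by
        refine IsCoprime.pow_left ?_
        refine (Polynomial.irreducible_X_sub_C z).coprime_iff_not_dvd.mpr ?_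
        rw [Polynomial.dvd_iff_isRoot]
        exact hq₂l
      obtain ⟨u, v, huv⟩ := id cop
      set a := (X - C z) ^ m with ha
      set r := r₁ * (v * q₂) + r₂ * (u * a) with hr
      have hd1 : a ∣ r - r₁ := ⟨u * (r₂ - r₁), by rw [hr]; linear_combination r₁ * huv⟩
      have hd2 : q₂ ∣ r - r₂ := ⟨v * (r₁ - r₂), by rw [hr]; linear_combination r₂ * huv⟩
      have hda : a ∣ r ^ n - X := by
        have h1 : a ∣ r ^ n - r₁ ^ n := hd1.trans (sub_dvd_pow_sub_pow r r₁ n)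
        have := dvd_add h1 hr₁
        rwa [sub_add_sub_cancel] at this
      have hdb : q₂ ∣ r ^ n - X := by
        have h1 : q₂ ∣ r ^ n - r₂ ^ n := hd2.trans (sub_dvd_pow_sub_pow r r₂ n)
        have := dvd_add h1 hr₂
        rwa [sub_add_sub_cancel] at this
      exact ⟨r, heq ▸ cop.mul_dvd hda hdb⟩

lemma matrix_nth_root {d n : ℕ} (hn : 0 < n) (Q : Matrix (Fin d) (Fin d) ℂ)
    (hQ : IsUnit Q.det) : ∃ p : ℂ[X], (Polynomial.aeval Q p) ^ n = Q := by
  set q := Q.charpoly with hq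
  have hq0 : q ≠ 0 := Q.charpoly_monic.ne_zero
  have hqe : q.eval 0 ≠ 0 := by
    rw [← Polynomial.coeff_zero_eq_eval_zero]
    intro h0
    rw [Matrix.det_eq_sign_charpoly_coeff, ← hq, h0, mul_zero] at hQ
    exact hQ.ne_zero rfl
  obtain ⟨r, s, hs⟩ := exists_nth_root_poly hn q.natDegree q le_rfl hq0 hqe
  refine ⟨r, ?_⟩
  have h1 : Polynomial.aeval Q (r ^ n - X) = 0 := by
    rw [hs, _root_.map_mul, hq, Matrix.aeval_self_charpoly, zero_mul]
  rw [map_sub, map_pow, Polynomial.aeval_X] at h1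
  exact sub_eq_zero.mp h1

/-! ### Collapse lemmas -/

/-- Mask a family of matrices outside a finite set of sites. -/
def msk (CC : Fin n → Matrix (Fin d) (Fin d) ℂ) (s : Finset (Fin n)) :
    Fin n → Matrix (Fin d) (Fin d) ℂ :=
  fun k => if k ∈ s then CC k else 1

lemma msk_insert (CC : Fin n → Matrix (Fin d) (Fin d) ℂ) {s : Finset (Fin n)} {i : Fin n}
    (hi : i ∉ s) :
    msk CC (insert i s)
      = fun k => Function.update (fun _ => (1 : Matrix (Fin d) (Fin d) ℂ)) i (CC i) k
          * msk CC s k := by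
  funext k
  by_cases hk : k = i
  · subst hk
    simp [msk, hi]
  · simp [msk, hk, Function.update_of_ne hk]

lemma collapse (hn : 3 ≤ n) {ψ : (Fin n → Fin d) → ℂ} (i₀ : Fin n)
    (CC : Fin n → Matrix (Fin d) (Fin d) ℂ) (hC : ∀ k, Bal ψ (CC k))
    (hU : ∀ k, IsUnit (CC k)) (s : Finset (Fin n)) :
    ∃ Q : Matrix (Fin d) (Fin d) ℂ, Bal ψ Q ∧ IsUnit Q ∧
      appAll (msk CC s) ψ = appAt i₀ Q ψ := by
  classical
  induction s using Finset.induction_on with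
  | empty =>
    refine ⟨1, bal_one ψ, isUnit_one, ?_⟩
    have h1 : msk CC (∅ : Finset (Fin n)) = fun _ => (1 : Matrix (Fin d) (Fin d) ℂ) := by
      funext k; simp [msk]
    rw [h1, appAll_one i₀, (appAt_one i₀ ψ)]
  | insert i s hi _ =>
    obtain ⟨Q, hQb, hQu, hQe⟩ := ‹∃ Q, Bal ψ Q ∧ IsUnit Q ∧ appAll (msk CC s) ψ = appAt i₀ Q ψ›
    have step : appAll (msk CC (insert i s)) ψ = appAt i (CC i) (appAt i₀ Q ψ) := by
      rw [msk_insert CC hi, ← appAll_mul, appAll_eq_appAt, hQe]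
    by_cases hii : i = i₀
    · subst hii
      refine ⟨CC i * Q, bal_mul hn (hC i) hQb, (hU i).mul hQu, ?_⟩
      rw [step, appAt_mul]
    · refine ⟨Q * CC i, bal_mul hn hQb (hC i), hQu.mul (hU i), ?_⟩
      rw [step, appAt_comm hii, hC i i i₀, appAt_mul]

lemma collapse_const (hn : 3 ≤ n) {ψ : (Fin n → Fin d) → ℂ} (i₀ : Fin n)
    (D : Matrix (Fin d) (Fin d) ℂ) (hD : Bal ψ D) (s : Finset (Fin n)) :
    appAll (msk (fun _ => D) s) ψ = appAt i₀ (D ^ s.card) ψ := by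
  classical
  induction s using Finset.induction_on with
  | empty =>
    have h1 : msk (fun _ => D) (∅ : Finset (Fin n)) = fun _ => (1 : Matrix (Fin d) (Fin d) ℂ) := by
      funext k; simp [msk]
    rw [h1, appAll_one i₀]
    simp [appAt_one]
  | insert i s hi ih =>
    have step : appAll (msk (fun _ => D) (insert i s)) ψ
        = appAt i D (appAt i₀ (D ^ s.card) ψ) := by
      rw [msk_insert _ hi, ← appAll_mul, appAll_eq_appAt, ih]
    rw [Finset.card_insert_of_notMem hi, step]
    by_cases hii : i = i₀
    · subst hii
      rw [appAt_mul, ← pow_succ']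
    · rw [appAt_comm hii, hD i i₀, appAt_mul, ← pow_succ]

/-! ### The pair relation -/

lemma pair_rel (hn : 3 ≤ n) {ψ φ : (Fin n → Fin d) → ℂ} (hψ : PSym ψ) (hφ : PSym φ)
    (A : Fin n → Matrix (Fin d) (Fin d) ℂ) (hA : ∀ i, IsUnit (A i).det)
    (h : appAll A ψ = φ) {i j : Fin n} (hij : i ≠ j) :
    appAt i ((A i)⁻¹ * A j) ψ = appAt j ((A i)⁻¹ * A j) ψ := by
  classical
  set σ : Equiv.Perm (Fin n) := Equiv.swap i j with hσ
  have hswap : appAll (A ∘ σ) ψ = appAll A ψ := by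
    rw [appAll_perm hψ A σ, h]
    funext x
    rw [hφ σ⁻¹ x]
  have hstab : appAll (fun k => (A k)⁻¹ * A (σ k)) ψ = ψ := by
    have h1 : appAll (fun k => (A k)⁻¹) (appAll (A ∘ σ) ψ)
        = appAll (fun k => (A k)⁻¹ * A (σ k)) ψ := by
      rw [appAll_mul]
      rfl
    have h2 : appAll (fun k => (A k)⁻¹) (appAll A ψ) = ψ := by
      rw [appAll_mul]
      have h3 : (fun k => (A k)⁻¹ * A k) = fun _ : Fin n => (1 : Matrix (Fin d) (Fin d) ℂ) := by
        funext k
        exact Matrix.nonsing_inv_mul (A k) (hA k)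
      rw [h3, appAll_one i]
    rw [← h1, hswap, h2]
  set Ci := (A i)⁻¹ * A j with hCi
  set Cj := (A j)⁻¹ * A i with hCj
  have hG : (fun k => (A k)⁻¹ * A (σ k))
      = fun k => Function.update (fun _ => (1 : Matrix (Fin d) (Fin d) ℂ)) i Ci k
          * Function.update (fun _ => (1 : Matrix (Fin d) (Fin d) ℂ)) j Cj k := by
    funext k
    by_cases hk : k = i
    · subst hk
      rw [Function.update_self, Function.update_of_ne hij, mul_one, hσ, hCi,
        Equiv.swap_apply_left]
    · by_cases hk2 : k = j
      · subst hk2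
        rw [Function.update_of_ne hk, Function.update_self, one_mul, hσ, hCj,
          Equiv.swap_apply_right]
      · rw [Function.update_of_ne hk, Function.update_of_ne hk2, one_mul, hσ,
          Equiv.swap_apply_of_ne_of_ne hk hk2, Matrix.nonsing_inv_mul (A k) (hA k)]
  have hstab2 : appAt i Ci (appAt j Cj ψ) = ψ := by
    rw [← appAll_eq_appAt i Ci, ← appAll_eq_appAt j Cj, appAll_mul, ← hG, hstab]
  have hCiCj : Ci * Cj = 1 := by
    rw [hCi, hCj, mul_assoc, ← mul_assoc (A j), Matrix.mul_nonsing_inv (A j) (hA j),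
      one_mul, Matrix.nonsing_inv_mul (A i) (hA i)]
  calc appAt i Ci ψ = appAt i Ci (appAt j 1 ψ) := by rw [appAt_one]
    _ = appAt i Ci (appAt j (Ci * Cj) ψ) := by rw [hCiCj]
    _ = appAt i Ci (appAt j Ci (appAt j Cj ψ)) := by rw [appAt_mul]
    _ = appAt j Ci (appAt i Ci (appAt j Cj ψ)) := appAt_comm hij Ci Ci _
    _ = appAt j Ci ψ := by rw [hstab2]

end Stmt8Aux

open Stmt8Aux in
theorem stmt_8 {n d : ℕ} (hn : 3 ≤ n) (ψ φ : (Fin n → Fin d) → ℂ)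
    (hψ : PSym ψ) (hφ : PSym φ)
    (A : Fin n → Matrix (Fin d) (Fin d) ℂ) (hA : ∀ i, IsUnit (A i).det)
    (h : appAll A ψ = φ) :
    ∃ B : Matrix (Fin d) (Fin d) ℂ, IsUnit B.det ∧ appAll (fun _ => B) ψ = φ := by
  classical
  set i₀ : Fin n := ⟨0, by omega⟩ with hi₀
  set CC : Fin n → Matrix (Fin d) (Fin d) ℂ := fun k => (A i₀)⁻¹ * A k with hCC
  have hCi₀ : CC i₀ = 1 := Matrix.nonsing_inv_mul (A i₀) (hA i₀)
  have hCbal : ∀ k, Bal ψ (CC k) := by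
    intro k
    by_cases hk : k = i₀
    · subst hk
      rw [hCi₀]
      exact bal_one ψ
    · intro i j
      by_cases hij : i = j
      · rw [hij]
      · exact bal_spread hψ (CC k) (Ne.symm hk) hij
          (pair_rel hn hψ hφ A hA h (Ne.symm hk))
  have hinvdet : IsUnit ((A i₀)⁻¹).det := by
    have h1 : (A i₀)⁻¹ * A i₀ = 1 := Matrix.nonsing_inv_mul (A i₀) (hA i₀)
    have h2 := congrArg Matrix.det h1
    rw [Matrix.det_mul, Matrix.det_one] at h2
    exact IsUnit.of_mul_eq_one _ h2
  have hCU : ∀ k, IsUnit (CC k) := by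
    intro k
    rw [Matrix.isUnit_iff_isUnit_det, hCC, Matrix.det_mul]
    exact hinvdet.mul (hA k)
  obtain ⟨Q, hQbal, hQunit, hQeq⟩ := collapse hn i₀ CC hCbal hCU Finset.univ
  have hmsku : msk CC Finset.univ = CC := by funext k; simp [msk]
  rw [hmsku] at hQeq
  have hQdet : IsUnit Q.det := (Matrix.isUnit_iff_isUnit_det Q).mp hQunit
  obtain ⟨p, hp⟩ := matrix_nth_root (by omega : 0 < n) Q hQdet
  set D := Polynomial.aeval Q p with hD
  have hDbal : Bal ψ D := bal_aeval hn hQbal p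
  have hDdet : IsUnit D.det := by
    have h1 : D.det ^ n = Q.det := by rw [← Matrix.det_pow, hp]
    rw [isUnit_iff_ne_zero]
    intro h0
    apply hQdet.ne_zero
    rw [← h1, h0, zero_pow (by omega : n ≠ 0)]
  refine ⟨A i₀ * D, ?_, ?_⟩
  · rw [Matrix.det_mul]
    exact (hA i₀).mul hDdet
  · have hDn : appAll (fun _ => D) ψ = appAt i₀ Q ψ := by
      have h2 := collapse_const hn i₀ D hDbal Finset.univ
      have hmskD : msk (fun _ : Fin n => D) Finset.univ = fun _ => D := by
        funext k; simp [msk]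
      rw [hmskD, Finset.card_univ, Fintype.card_fin, hp] at h2
      exact h2
    have hconst : appAll (fun _ => A i₀ * D) ψ
        = appAll (fun _ => A i₀) (appAll (fun _ => D) ψ) := (appAll_mul _ _ ψ).symm
    rw [← h, hconst, hDn, ← hQeq, appAll_mul]
    have hAeq : (fun k => A i₀ * CC k) = A := by
      funext k
      rw [hCC, ← mul_assoc, Matrix.mul_nonsing_inv (A i₀) (hA i₀), one_mul]
    rw [hAeq]
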